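/- For k ∈ ℤ define u_k = (2+√3)^k − (2−√3)^k. Let Δ^L > 0, Δ^R > 0, set a = −(1/2)·Δ^L/(Δ^R+Δ^L) and b = −(1/2)·Δ^R/(Δ^R+Δ^L), and let (f_k)_{k∈ℤ} be a real sequence. Let A_n = (−1)^{n-1}·u_1·a/(u_n + u_{n-1}·a). Define C_1 = (3/2)·(1/(Δ^R+Δ^L))·[(Δ^L/Δ^R)·f_1 + (Δ^R/Δ^L − Δ^L/Δ^R)·f_0 − (Δ^R/Δ^L)·f_{-1}], C_2 = [4·C_1 + 3·a·(f_2 − f_0)/Δ^R]/(4 + a), and for n ≥ 2: C_{n+1} = [4·C_n + (A_n/A_{n-1})·C_{n-1} + 3·A_n·(f_{n+1} − f_{n-1})/Δ^R]/(4 + A_n/A_{n-1}). Then all denominators in this recursion are nonzero, and for every n ≥ 1: C_n = Σ_{k=-1}^{n} ω_{k,n}·f_k, where ω_{n,n} = 3·(−1)^n·(a/Δ^R)·u_1/(u_n + u_{n-1}·a); ω_{k,n} = 3·(−1)^k·(a/Δ^R)·(u_{n-k+1} − u_{n-k-1})/(u_n + u_{n-1}·a) for 1 ≤ k ≤ n−1;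 ω_{0,n} = 3·[(a/Δ^R)·(u_n − u_{n-1}) − (b/Δ^L)·u_n]/(u_n + u_{n-1}·a); and ω_{-1,n} = 3·(b/Δ^L)·u_n/(u_n + u_{n-1}·a). -/

import Mathlib

/-- The sequence `u_k = (2+√3)^k − (2−√3)^k`, indexed by the integers. -/
noncomputable def uSeq (k : ℤ) : ℝ :=
  (2 + Real.sqrt 3) ^ k - (2 - Real.sqrt 3) ^ k

lemma sqrt3_sq : Real.sqrt 3 ^ 2 = 3 := Real.sq_sqrt (by norm_num)

lemma sqrt3_lt : Real.sqrt 3 < 2 := by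
  nlinarith [Real.sq_sqrt (show (3:ℝ) ≥ 0 by norm_num), Real.sqrt_nonneg 3]

lemma sqrt3_pos : 0 < Real.sqrt 3 := Real.sqrt_pos.mpr (by norm_num)

lemma alpha_ne : (2 + Real.sqrt 3 : ℝ) ≠ 0 := by positivity

lemma beta_ne : (2 - Real.sqrt 3 : ℝ) ≠ 0 := by
  have := sqrt3_lt; linarith

lemma zpow_root (x : ℝ) (hx : x ≠ 0) (h : x ^ 2 = 4 * x - 1) (k : ℤ) :
    x ^ (k + 1) = 4 * x ^ k - x ^ (k - 1) := by
  have h1 : x ^ (k + 1) = x ^ (k - 1) * x ^ (2 : ℕ) := by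
    rw [← zpow_natCast x 2, ← zpow_add₀ hx]; ring_nf
  have h2 : x ^ k = x ^ (k - 1) * x := by
    rw [← zpow_add_one₀ hx]; ring_nf
  rw [h1, h2]
  push_cast [h]
  ring

lemma uSeq_rec (k : ℤ) : uSeq (k + 1) = 4 * uSeq k - uSeq (k - 1) := by
  unfold uSeq
  rw [zpow_root _ alpha_ne (by nlinarith [sqrt3_sq]) k,
      zpow_root _ beta_ne (by nlinarith [sqrt3_sq]) k]
  ring

lemma uSeq_zero : uSeq 0 = 0 := by simp [uSeq]

lemma uSeq_one : uSeq 1 = 2 * Real.sqrt 3 := by simp [uSeq]; ring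

lemma uSeq_mono (n : ℕ) : 0 ≤ uSeq n ∧ uSeq n < uSeq (n + 1) := by
  induction n with
  | zero =>
    have := sqrt3_pos
    constructor
    · simp [uSeq_zero]
    · push_cast
      rw [uSeq_zero, uSeq_one]
      linarith
  | succ m ih =>
    obtain ⟨h0, h1⟩ := ih
    have := uSeq_rec ((m : ℤ) + 1)
    have hm : ((m : ℤ) + 1 - 1) = (m : ℤ) := by ring
    rw [hm] at this
    push_cast
    constructor <;> [linarith; linarith]

noncomputable def Dfun (a : ℝ) (n : ℕ) : ℝ := uSeq (n : ℤ) + uSeq ((n : ℤ) - 1) * a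

noncomputable def Nfun (ΔL ΔR a b : ℝ) (f : ℤ → ℝ) (n : ℕ) : ℝ :=
  3 * (-1 : ℝ) ^ n * (a / ΔR) * uSeq 1 * f (n : ℤ)
  + (∑ k ∈ Finset.Icc (1 : ℤ) ((n : ℤ) - 1),
      3 * (-1 : ℝ) ^ k * (a / ΔR) * (uSeq ((n : ℤ) - k + 1) - uSeq ((n : ℤ) - k - 1)) * f k)
  + 3 * ((a / ΔR) * (uSeq (n : ℤ) - uSeq ((n : ℤ) - 1)) - (b / ΔL) * uSeq (n : ℤ)) * f 0
  + 3 * (b / ΔL) * uSeq (n : ℤ) * f (-1)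

lemma sum_Icc_top (a b : ℤ) (h : a ≤ b) (f : ℤ → ℝ) :
    ∑ k ∈ Finset.Icc a b, f k = (∑ k ∈ Finset.Icc a (b - 1), f k) + f b := by
  have hs : Finset.Icc a b = insert b (Finset.Icc a (b - 1)) := by
    ext x; simp only [Finset.mem_Icc, Finset.mem_insert]; omega
  rw [hs, Finset.sum_insert (by simp only [Finset.mem_Icc]; omega)]
  ring

lemma Nrec (ΔL ΔR a b : ℝ) (f : ℤ → ℝ) (n : ℕ) :
    Nfun ΔL ΔR a b f (n + 3)
      = 4 * Nfun ΔL ΔR a b f (n + 2) - Nfun ΔL ΔR a b f (n + 1)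
        + 3 * (-1 : ℝ) ^ (n + 1) * uSeq 1 * (a / ΔR) * (f ((n : ℤ) + 3) - f ((n : ℤ) + 1)) := by
  simp only [Nfun]
  push_cast
  rw [show ((n : ℤ) + 3 - 1) = ((n : ℤ) + 2) - 1 + 1 by ring]
  rw [sum_Icc_top 1 ((n : ℤ) + 2 - 1 + 1) (by omega)]
  rw [show ((n : ℤ) + 2 - 1 + 1 - 1) = ((n : ℤ) + 2) - 1 by ring]
  rw [sum_Icc_top 1 ((n : ℤ) + 2 - 1) (by omega)]
  rw [show ((n : ℤ) + 2 - 1 - 1) = ((n : ℤ) + 1) - 1 by ring]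
  rw [sum_Icc_top 1 ((n : ℤ) + 2 - 1) (by omega)]
  have hcong : ∀ k ∈ Finset.Icc (1:ℤ) ((n:ℤ) + 1 - 1),
      3 * (-1 : ℝ) ^ k * (a / ΔR) * (uSeq ((n : ℤ) + 3 - k + 1) - uSeq ((n : ℤ) + 3 - k - 1)) * f k
      = 4 * (3 * (-1 : ℝ) ^ k * (a / ΔR) * (uSeq ((n : ℤ) + 2 - k + 1) - uSeq ((n : ℤ) + 2 - k - 1)) * f k)
        - 3 * (-1 : ℝ) ^ k * (a / ΔR) * (uSeq ((n : ℤ) + 1 - k + 1) - uSeq ((n : ℤ) + 1 - k - 1)) * f k := by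
    intro k hk
    have r1 := uSeq_rec ((n:ℤ) + 2 - k + 1)
    have r2 := uSeq_rec ((n:ℤ) + 1 - k)
    ring_nf at r1 r2 ⊢
    linear_combination (3 * (-1 : ℝ) ^ k * (a / ΔR) * f k) * (r1 - r2)
  rw [Finset.sum_congr rfl hcong, Finset.sum_sub_distrib, ← Finset.mul_sum]
  ring_nf
  have e1 : (-1 : ℝ) ^ (1 + (n : ℤ)) = -((-1 : ℝ) ^ n) := by
    rw [show (1 + (n:ℤ)) = (n:ℤ) + 1 by ring, zpow_add_one₀ (by norm_num : (-1:ℝ) ≠ 0),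
      zpow_natCast]; ring
  have e2 : (-1 : ℝ) ^ (2 + (n : ℤ)) = (-1 : ℝ) ^ n := by
    rw [show (2 + (n:ℤ)) = ((n:ℤ) + 1) + 1 by ring, zpow_add_one₀ (by norm_num : (-1:ℝ) ≠ 0),
      zpow_add_one₀ (by norm_num : (-1:ℝ) ≠ 0), zpow_natCast]; ring
  have h3 : uSeq 3 = 4 * uSeq 2 - uSeq 1 := by
    have := uSeq_rec 2; norm_num at this; exact this
  have h2 : uSeq 2 = 4 * uSeq 1 - uSeq 0 := by
    have := uSeq_rec 1; norm_num at this; exact this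
  have hbig : uSeq (3 + (n:ℤ)) = 4 * uSeq (2 + (n:ℤ)) - uSeq (1 + (n:ℤ)) := by
    have := uSeq_rec (2 + (n:ℤ))
    rw [show (2 + (n:ℤ) + 1) = 3 + (n:ℤ) by ring, show (2 + (n:ℤ) - 1) = 1 + (n:ℤ) by ring] at this
    exact this
  have hbig2 : uSeq (2 + (n:ℤ)) = 4 * uSeq (1 + (n:ℤ)) - uSeq ((n:ℤ)) := by
    have := uSeq_rec (1 + (n:ℤ))
    rw [show (1 + (n:ℤ) + 1) = 2 + (n:ℤ) by ring, show (1 + (n:ℤ) - 1) = (n:ℤ) by ring] at this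
    exact this
  rw [e1, e2, uSeq_zero, h3, h2, hbig, hbig2, uSeq_zero]
  ring


/-- **Explicit weights of the inhomogeneous coefficient `c_{1,n}` of the forward
extension relation in the uniform-per-patch case.** The recursively defined
`C_n` has nonzero denominators and equals the weighted sum
`Σ_{k=-1}^{n} ω_{k,n} f_k` with the stated explicit weights. -/
theorem forward_inhomogeneous_coefficient_weights
    (ΔL ΔR : ℝ) (hL : 0 < ΔL) (hR : 0 < ΔR)
    (a b : ℝ)
    (ha : a = -(1/2) * ΔL / (ΔR + ΔL))
    (hb : b = -(1/2) * ΔR / (ΔR + ΔL))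
    (f : ℤ → ℝ)
    (A : ℕ → ℝ)
    (hA : ∀ n : ℕ, 1 ≤ n →
      A n = (-1 : ℝ) ^ (n - 1) * uSeq 1 * a / (uSeq (n : ℤ) + uSeq ((n : ℤ) - 1) * a))
    (C : ℕ → ℝ)
    (hC1 : C 1 = 3/2 * (1 / (ΔR + ΔL)) *
      ((ΔL / ΔR) * f 1 + (ΔR / ΔL - ΔL / ΔR) * f 0 - (ΔR / ΔL) * f (-1)))
    (hC2 : C 2 = (4 * C 1 + 3 * a * (f 2 - f 0) / ΔR) / (4 + a))
    (hCrec : ∀ n : ℕ, 2 ≤ n →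
      C (n + 1) = (4 * C n + (A n / A (n - 1)) * C (n - 1)
                    + 3 * A n * (f ((n : ℤ) + 1) - f ((n : ℤ) - 1)) / ΔR) /
                  (4 + A n / A (n - 1))) :
    (∀ n : ℕ, 1 ≤ n → uSeq (n : ℤ) + uSeq ((n : ℤ) - 1) * a ≠ 0) ∧
    (4 + a ≠ 0) ∧
    (∀ n : ℕ, 2 ≤ n → A (n - 1) ≠ 0 ∧ 4 + A n / A (n - 1) ≠ 0) ∧
    (∀ n : ℕ, 1 ≤ n →
      C n = 3 * (-1 : ℝ) ^ n * (a / ΔR) * uSeq 1 /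
              (uSeq (n : ℤ) + uSeq ((n : ℤ) - 1) * a) * f (n : ℤ)
          + (∑ k ∈ Finset.Icc (1 : ℤ) ((n : ℤ) - 1),
              3 * (-1 : ℝ) ^ k * (a / ΔR) * (uSeq ((n : ℤ) - k + 1) - uSeq ((n : ℤ) - k - 1)) /
                (uSeq (n : ℤ) + uSeq ((n : ℤ) - 1) * a) * f k)
          + 3 * ((a / ΔR) * (uSeq (n : ℤ) - uSeq ((n : ℤ) - 1)) - (b / ΔL) * uSeq (n : ℤ)) /
              (uSeq (n : ℤ) + uSeq ((n : ℤ) - 1) * a) * f 0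
          + 3 * (b / ΔL) * uSeq (n : ℤ) /
              (uSeq (n : ℤ) + uSeq ((n : ℤ) - 1) * a) * f (-1)) := by
  have hSum : (0:ℝ) < ΔR + ΔL := by linarith
  have hSumne : ΔR + ΔL ≠ 0 := ne_of_gt hSum
  have hRne : ΔR ≠ 0 := ne_of_gt hR
  have hLne : ΔL ≠ 0 := ne_of_gt hL
  have haneg : a < 0 := by
    rw [ha]; apply div_neg_of_neg_of_pos (by nlinarith) hSum
  have hahalf : -(1/2) < a := by
    rw [ha, lt_div_iff₀ hSum]; nlinarith
  have hane : a ≠ 0 := ne_of_lt haneg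
  have hu1pos : 0 < uSeq 1 := by rw [uSeq_one]; have := sqrt3_pos; linarith
  have hu1ne : uSeq 1 ≠ 0 := ne_of_gt hu1pos
  have h4ane : (4:ℝ) + a ≠ 0 := by intro h; nlinarith
  -- positivity of the denominators
  have hDpos : ∀ n : ℕ, 1 ≤ n → 0 < Dfun a n := by
    intro n hn
    obtain ⟨m, rfl⟩ : ∃ m, n = m + 1 := ⟨n - 1, by omega⟩
    obtain ⟨h0, h1⟩ := uSeq_mono m
    simp only [Dfun]
    have harg : ((m + 1 : ℕ) : ℤ) - 1 = (m : ℤ) := by push_cast; ring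
    rw [harg]
    push_cast at h1 ⊢
    nlinarith [mul_nonneg (by linarith : (0:ℝ) ≤ a + 1/2) h0]
  have hDne : ∀ n : ℕ, 1 ≤ n → Dfun a n ≠ 0 := fun n hn => ne_of_gt (hDpos n hn)
  -- D recursion
  have hDrec : ∀ n : ℕ, Dfun a (n + 2) = 4 * Dfun a (n + 1) - Dfun a n := by
    intro n
    simp only [Dfun]
    push_cast
    have r1 := uSeq_rec ((n:ℤ) + 1)
    have r2 := uSeq_rec ((n:ℤ))
    ring_nf at r1 r2 ⊢
    linear_combination r1 + a * r2
  -- A values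
  have hAval : ∀ n : ℕ, A (n + 1) = (-1:ℝ) ^ n * uSeq 1 * a / Dfun a (n + 1) := by
    intro n
    have := hA (n + 1) (by omega)
    rw [show n + 1 - 1 = n by omega] at this
    exact this
  have hAne : ∀ n : ℕ, A (n + 1) ≠ 0 := by
    intro n
    rw [hAval n]
    exact div_ne_zero (by
      apply mul_ne_zero (mul_ne_zero (pow_ne_zero _ (by norm_num)) hu1ne) hane)
      (hDne (n+1) (by omega))
  have hratio : ∀ n : ℕ, A (n + 2) / A (n + 1) = -(Dfun a (n + 1) / Dfun a (n + 2)) := by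
    intro n
    rw [hAval (n + 1), hAval n]
    have d1 := hDne (n + 1) (by omega)
    have d2 := hDne (n + 2) (by omega)
    field_simp
    ring
  have h4r : ∀ n : ℕ, 4 + A (n + 2) / A (n + 1) = Dfun a (n + 3) / Dfun a (n + 2) := by
    intro n
    rw [hratio n]
    have d2 := hDne (n + 2) (by omega)
    field_simp
    linear_combination - hDrec (n + 1)
  refine ⟨fun n hn => hDne n hn, h4ane, ?_, ?_⟩
  · intro n hn
    obtain ⟨m, rfl⟩ : ∃ m, n = m + 2 := ⟨n - 2, by omega⟩
    rw [show m + 2 - 1 = m + 1 by omega]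
    refine ⟨hAne m, ?_⟩
    rw [h4r m]
    exact div_ne_zero (hDne (m+3) (by omega)) (hDne (m+2) (by omega))
  -- main part
  have base1 : C 1 * Dfun a 1 = Nfun ΔL ΔR a b f 1 := by
    simp only [Dfun, Nfun]
    norm_num
    rw [hC1, ha, hb, uSeq_zero]
    field_simp
    ring
  have hu2 : uSeq 2 = 4 * uSeq 1 := by
    have := uSeq_rec 1; norm_num [uSeq_zero] at this; exact this
  have base2 : C 2 * Dfun a 2 = Nfun ΔL ΔR a b f 2 := by
    have e : C 2 * (4 + a) = 4 * C 1 + 3 * a * (f 2 - f 0) / ΔR := by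
      rw [hC2, div_mul_cancel₀ _ h4ane]
    simp only [Dfun, Nfun] at base1 ⊢
    norm_num at base1 ⊢
    rw [uSeq_zero] at base1 ⊢
    rw [hu2]
    linear_combination uSeq 1 * e + 4 * base1
  have step : ∀ m : ℕ, C (m + 1) * Dfun a (m + 1) = Nfun ΔL ΔR a b f (m + 1) →
      C (m + 2) * Dfun a (m + 2) = Nfun ΔL ΔR a b f (m + 2) →
      C (m + 3) * Dfun a (m + 3) = Nfun ΔL ΔR a b f (m + 3) := by
    intro m ih1 ih2
    have d1 := hDne (m+1) (by omega)
    have d2 := hDne (m+2) (by omega)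
    have d3 := hDne (m+3) (by omega)
    have hC3 := hCrec (m + 2) (by omega)
    rw [show m + 2 - 1 = m + 1 by omega] at hC3
    rw [h4r m, hratio m, hAval (m + 1)] at hC3
    rw [eq_div_iff (div_ne_zero d3 d2)] at hC3
    push_cast at hC3
    rw [show ((m:ℤ)+2+1) = (m:ℤ)+3 by ring, show ((m:ℤ)+2-1) = (m:ℤ)+1 by ring] at hC3
    rw [show m+2+1 = m+3 from rfl, show m+1+1 = m+2 from rfl] at hC3
    have hN := Nrec ΔL ΔR a b f m
    rw [hN, ← ih1, ← ih2]
    field_simp at hC3 ⊢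
    apply mul_right_cancel₀ (pow_ne_zero 2 d2)
    linear_combination (Dfun a (m + 2)) ^ 2 * hC3
  have pair : ∀ m : ℕ, C (m + 1) * Dfun a (m + 1) = Nfun ΔL ΔR a b f (m + 1) ∧
      C (m + 2) * Dfun a (m + 2) = Nfun ΔL ΔR a b f (m + 2) := by
    intro m
    induction m with
    | zero => exact ⟨base1, base2⟩
    | succ k ih => exact ⟨ih.2, step k ih.1 ih.2⟩
  intro n hn
  obtain ⟨m, rfl⟩ : ∃ m, n = m + 1 := ⟨n - 1, by omega⟩
  have h := (pair m).1
  simp only [Dfun, Nfun] at h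
  have hDne' : uSeq ((m+1 : ℕ) : ℤ) + uSeq (((m+1 : ℕ) : ℤ) - 1) * a ≠ 0 := hDne (m+1) (by omega)
  have hsum2 : (∑ k ∈ Finset.Icc (1 : ℤ) (((m+1:ℕ) : ℤ) - 1),
        3 * (-1 : ℝ) ^ k * (a / ΔR) * (uSeq (((m+1:ℕ) : ℤ) - k + 1) - uSeq (((m+1:ℕ) : ℤ) - k - 1)) /
          (uSeq ((m+1:ℕ) : ℤ) + uSeq (((m+1:ℕ) : ℤ) - 1) * a) * f k)
      = (∑ k ∈ Finset.Icc (1 : ℤ) (((m+1:ℕ) : ℤ) - 1),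
        3 * (-1 : ℝ) ^ k * (a / ΔR) * (uSeq (((m+1:ℕ) : ℤ) - k + 1) - uSeq (((m+1:ℕ) : ℤ) - k - 1)) * f k) /
          (uSeq ((m+1:ℕ) : ℤ) + uSeq (((m+1:ℕ) : ℤ) - 1) * a) := by
    rw [Finset.sum_div]
    exact Finset.sum_congr rfl fun k _ => by ring
  rw [hsum2]
  rw [show (3 : ℝ) * (-1 : ℝ) ^ (m+1) * (a / ΔR) * uSeq 1 /
              (uSeq ((m+1:ℕ) : ℤ) + uSeq (((m+1:ℕ) : ℤ) - 1) * a) * f ((m+1:ℕ) : ℤ)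
          + (∑ k ∈ Finset.Icc (1 : ℤ) (((m+1:ℕ) : ℤ) - 1),
              3 * (-1 : ℝ) ^ k * (a / ΔR) * (uSeq (((m+1:ℕ) : ℤ) - k + 1) - uSeq (((m+1:ℕ) : ℤ) - k - 1)) * f k) /
              (uSeq ((m+1:ℕ) : ℤ) + uSeq (((m+1:ℕ) : ℤ) - 1) * a)
          + 3 * ((a / ΔR) * (uSeq ((m+1:ℕ) : ℤ) - uSeq (((m+1:ℕ) : ℤ) - 1)) - (b / ΔL) * uSeq ((m+1:ℕ) : ℤ)) /
              (uSeq ((m+1:ℕ) : ℤ) + uSeq (((m+1:ℕ) : ℤ) - 1) * a) * f 0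
          + 3 * (b / ΔL) * uSeq ((m+1:ℕ) : ℤ) /
              (uSeq ((m+1:ℕ) : ℤ) + uSeq (((m+1:ℕ) : ℤ) - 1) * a) * f (-1)
        = (3 * (-1 : ℝ) ^ (m+1) * (a / ΔR) * uSeq 1 * f ((m+1:ℕ) : ℤ)
          + (∑ k ∈ Finset.Icc (1 : ℤ) (((m+1:ℕ) : ℤ) - 1),
              3 * (-1 : ℝ) ^ k * (a / ΔR) * (uSeq (((m+1:ℕ) : ℤ) - k + 1) - uSeq (((m+1:ℕ) : ℤ) - k - 1)) * f k)
          + 3 * ((a / ΔR) * (uSeq ((m+1:ℕ) : ℤ) - uSeq (((m+1:ℕ) : ℤ) - 1)) - (b / ΔL) * uSeq ((m+1:ℕ) : ℤ)) * f 0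
          + 3 * (b / ΔL) * uSeq ((m+1:ℕ) : ℤ) * f (-1)) /
            (uSeq ((m+1:ℕ) : ℤ) + uSeq (((m+1:ℕ) : ℤ) - 1) * a) from by ring]
  rw [eq_div_iff hDne']
  exact h
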